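/- Let α ∈ (0,1/2) be irrational and set δ_n = 4·sin²(π‖q_n α‖) where q_n are the convergent denominators of α. For every n ≥ 0, δ_n > 2·δ_{n+2}; moreover if a_{n+2} ≥ 2 then δ_n > 2·δ_{n+1}. -/

import Mathlib

open Real

/-- Iterates of the Gauss map starting at `α`:  `x₀ = α`, `x_{n+1} = frac (1 / xₙ)`. -/
noncomputable def cfX (α : ℝ) : ℕ → ℝ
  | 0 => α
  | n + 1 => Int.fract (1 / cfX α n)

/-- The `n`-th partial quotient `aₙ` (for `n ≥ 1`) of the continued fraction
`α = [a₁, a₂, …]` of an irrational `α ∈ (0,1)`. -/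
noncomputable def cfA (α : ℝ) (n : ℕ) : ℕ := ⌊1 / cfX α (n - 1)⌋₊

/-- Denominators `qₙ` of the rational convergents `pₙ/qₙ` of `α`:
`q₀ = 1`, `q₁ = a₁`, `q_{n+2} = a_{n+2} q_{n+1} + qₙ`. -/
noncomputable def cfQ (α : ℝ) : ℕ → ℕ
  | 0 => 1
  | 1 => cfA α 1
  | n + 2 => cfA α (n + 2) * cfQ α (n + 1) + cfQ α n

/-- Numerators `pₙ` of the rational convergents of `α`. -/
noncomputable def cfP (α : ℝ) : ℕ → ℕ
  | 0 => 0
  | 1 => 1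
  | n + 2 => cfA α (n + 2) * cfP α (n + 1) + cfP α n

/-- Distance from a real number to the nearest integer. -/
noncomputable def intDist (w : ℝ) : ℝ := |w - round w|

/-- `δₙ = 4 sin²(π ‖qₙ α‖)`. -/
noncomputable def cfDelta (α : ℝ) (n : ℕ) : ℝ :=
  4 * Real.sin (π * intDist ((cfQ α n : ℝ) * α)) ^ 2

section Aux

variable {α : ℝ}

lemma cfX_prop (hirr : Irrational α) (h0 : 0 < α) (h1 : α < 1) :
    ∀ n, Irrational (cfX α n) ∧ 0 < cfX α n ∧ cfX α n < 1 := by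
  intro n
  induction n with
  | zero => exact ⟨hirr, h0, h1⟩
  | succ n ih =>
    obtain ⟨hi, hp, _⟩ := ih
    have h1x : Irrational (1 / cfX α n) := by
      simpa [one_div] using hi.inv
    have hfi : Irrational (Int.fract (1 / cfX α n)) := by
      rw [Int.fract]
      exact h1x.sub_intCast _
    refine ⟨hfi, ?_, by simpa [cfX] using Int.fract_lt_one (1 / cfX α n)⟩
    have hne : Int.fract (1 / cfX α n) ≠ 0 := by
      intro h
      exact hfi ⟨0, by rw [h]; norm_num⟩
    have : cfX α (n + 1) = Int.fract (1 / cfX α n) := rfl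
    rw [this]
    exact lt_of_le_of_ne (Int.fract_nonneg _) (Ne.symm hne)

/-- `θ n = α x₁ ⋯ xₙ`. -/
noncomputable def cfTheta (α : ℝ) (n : ℕ) : ℝ :=
  α * ∏ i ∈ Finset.range n, cfX α (i + 1)

lemma cfTheta_zero : cfTheta α 0 = α := by simp [cfTheta]

lemma cfTheta_succ (n : ℕ) : cfTheta α (n + 1) = cfTheta α n * cfX α (n + 1) := by
  rw [cfTheta, cfTheta, Finset.prod_range_succ, mul_assoc]

lemma cfTheta_pos (hirr : Irrational α) (h0 : 0 < α) (h1 : α < 1) (n : ℕ) :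
    0 < cfTheta α n := by
  induction n with
  | zero => simpa [cfTheta_zero] using h0
  | succ n ih => rw [cfTheta_succ]; exact mul_pos ih (cfX_prop hirr h0 h1 (n + 1)).2.1

lemma cfTheta_lt (hirr : Irrational α) (h0 : 0 < α) (h1 : α < 1) (n : ℕ) :
    cfTheta α (n + 1) < cfTheta α n := by
  rw [cfTheta_succ]
  have := cfX_prop hirr h0 h1 (n + 1)
  nlinarith [cfTheta_pos hirr h0 h1 n, this.2.1, this.2.2]

lemma cfTheta_le (hirr : Irrational α) (h0 : 0 < α) (h1 : α < 1) (n : ℕ) :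
    cfTheta α n ≤ α := by
  induction n with
  | zero => simp [cfTheta_zero]
  | succ n ih => exact le_trans (cfTheta_lt hirr h0 h1 n).le ih

lemma cfA_cast (hirr : Irrational α) (h0 : 0 < α) (h1 : α < 1) (n : ℕ) :
    (cfA α (n + 1) : ℝ) = 1 / cfX α n - cfX α (n + 1) := by
  have hp := (cfX_prop hirr h0 h1 n).2.1
  have : (0:ℝ) ≤ 1 / cfX α n := by positivity
  rw [cfA]
  simp only [Nat.add_sub_cancel]
  rw [natCast_floor_eq_intCast_floor this]
  show ((⌊1 / cfX α n⌋ : ℝ)) = 1 / cfX α n - Int.fract (1 / cfX α n)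
  rw [Int.fract]; ring

lemma cfA_one_le (hirr : Irrational α) (h0 : 0 < α) (h1 : α < 1) (n : ℕ) :
    1 ≤ cfA α (n + 1) := by
  have h := cfX_prop hirr h0 h1 n
  rw [cfA]
  simp only [Nat.add_sub_cancel]
  apply Nat.le_floor
  rw [Nat.cast_one, le_div_iff₀ h.2.1]
  nlinarith [h.2.2]

lemma cfA_mul (hirr : Irrational α) (h0 : 0 < α) (h1 : α < 1) (n : ℕ) :
    (cfA α (n + 1) : ℝ) * cfX α n = 1 - cfX α n * cfX α (n + 1) := by
  have hp := (cfX_prop hirr h0 h1 n).2.1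
  rw [cfA_cast hirr h0 h1 n]
  field_simp

lemma cfTheta_rec (hirr : Irrational α) (h0 : 0 < α) (h1 : α < 1) (n : ℕ) :
    cfTheta α n = (cfA α (n + 2) : ℝ) * cfTheta α (n + 1) + cfTheta α (n + 2) := by
  have hp := (cfX_prop hirr h0 h1 (n + 1)).2.1
  have := cfA_mul hirr h0 h1 (n + 1)
  rw [cfTheta_succ (n+1), cfTheta_succ n]
  have hθ := cfTheta_pos hirr h0 h1 n
  nlinarith [this]

lemma e_eq (hirr : Irrational α) (h0 : 0 < α) (h1 : α < 1) (n : ℕ) :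
    (cfQ α n : ℝ) * α - (cfP α n : ℝ) = (-1) ^ n * cfTheta α n := by
  induction n using Nat.twoStepInduction with
  | zero => simp [cfQ, cfP, cfTheta_zero]
  | one =>
    have h := cfA_cast hirr h0 h1 0
    have hx0 : cfX α 0 = α := rfl
    have hα0 : α ≠ 0 := ne_of_gt h0
    simp only [cfQ, cfP, pow_one, cfTheta_succ 0, cfTheta_zero]
    rw [h, hx0]
    push_cast
    field_simp
    ring
  | more n ih1 ih2 =>
    have hrec : ((cfQ α (n+2) : ℝ)) * α - cfP α (n+2)
        = (cfA α (n+2) : ℝ) * ((cfQ α (n+1) : ℝ) * α - cfP α (n+1))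
          + ((cfQ α n : ℝ) * α - cfP α n) := by
      show ((cfA α (n + 2) * cfQ α (n + 1) + cfQ α n : ℕ) : ℝ) * α
          - ((cfA α (n + 2) * cfP α (n + 1) + cfP α n : ℕ) : ℝ) = _
      push_cast
      ring_nf
    rw [hrec, ih1, ih2, cfTheta_rec hirr h0 h1 n]
    ring

lemma round_eq_of (w : ℝ) (p : ℤ) (h : |w - p| < 1/2) : round w = p := by
  rw [round_eq]
  rw [abs_lt] at h
  rw [Int.floor_eq_iff]
  push_cast
  constructor <;> linarith

lemma intDist_eq (hirr : Irrational α) (h0 : 0 < α) (h2 : α < 1/2) (n : ℕ) :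
    intDist ((cfQ α n : ℝ) * α) = cfTheta α n := by
  have h1 : α < 1 := by linarith
  have he := e_eq hirr h0 h1 n
  have hpos := cfTheta_pos hirr h0 h1 n
  have hle : cfTheta α n < 1/2 := lt_of_le_of_lt (cfTheta_le hirr h0 h1 n) h2
  have habs : |(cfQ α n : ℝ) * α - (cfP α n : ℤ)| = cfTheta α n := by
    push_cast
    rw [he, abs_mul, abs_pow, abs_neg, abs_one, one_pow, one_mul, abs_of_pos hpos]
  have := round_eq_of ((cfQ α n : ℝ) * α) (cfP α n) (by rw [habs]; exact hle)
  rw [intDist, this, habs]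

lemma sin_sq_lt {x y : ℝ} (hx : 0 < x) (hxy : 2 * x < y) (hy : y < π / 2) :
    2 * Real.sin x ^ 2 < Real.sin y ^ 2 := by
  have hππ : (0:ℝ) < π := Real.pi_pos
  have hx4 : x < π / 4 := by linarith
  have hcos : Real.sqrt 2 / 2 < Real.cos x := by
    have : Real.cos (π/4) < Real.cos x := by
      apply Real.cos_lt_cos_of_nonneg_of_le_pi (le_of_lt hx) (by linarith) hx4
    rwa [Real.cos_pi_div_four] at this
  have hsin2x : Real.sin (2 * x) < Real.sin y :=
    Real.sin_lt_sin_of_lt_of_le_pi_div_two (by linarith) (le_of_lt hy) hxy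
  have hs2x : Real.sin (2 * x) = 2 * Real.sin x * Real.cos x := Real.sin_two_mul x
  have hsx : 0 < Real.sin x := Real.sin_pos_of_pos_of_lt_pi hx (by linarith)
  have hcx : 0 < Real.cos x := lt_trans (by positivity) hcos
  have hs2xpos : 0 < Real.sin (2 * x) := by
    rw [hs2x]; exact mul_pos (mul_pos two_pos hsx) hcx
  have h2 : Real.sin (2 * x) ^ 2 < Real.sin y ^ 2 := by
    nlinarith
  have hc2 : 1/2 < Real.cos x ^ 2 := by
    nlinarith [Real.sq_sqrt (by norm_num : (2:ℝ) ≥ 0), Real.sqrt_nonneg 2]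
  have hsq : 0 < Real.sin x ^ 2 := by positivity
  calc 2 * Real.sin x ^ 2 < 4 * Real.sin x ^ 2 * Real.cos x ^ 2 := by nlinarith [hsq, hc2]
    _ = Real.sin (2*x) ^ 2 := by rw [hs2x]; ring
    _ < Real.sin y ^ 2 := h2

end Aux


/-- For irrational `α ∈ (0, 1/2)` and every `n ≥ 0`:  `δₙ > 2 δ_{n+2}`, and if
`a_{n+2} ≥ 2` then moreover `δₙ > 2 δ_{n+1}`. -/
theorem cfDelta_decay (α : ℝ) (hirr : Irrational α)
    (hα : α ∈ Set.Ioo (0 : ℝ) (1 / 2)) (n : ℕ) :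
    cfDelta α n > 2 * cfDelta α (n + 2) ∧
      (2 ≤ cfA α (n + 2) → cfDelta α n > 2 * cfDelta α (n + 1)) := by
  obtain ⟨h0, h2⟩ := hα
  have h1 : α < 1 := by linarith
  have hθpos := cfTheta_pos hirr h0 h1
  have hθlt : ∀ m, cfTheta α m < 1/2 := fun m =>
    lt_of_le_of_lt (cfTheta_le hirr h0 h1 m) h2
  have hrec := cfTheta_rec hirr h0 h1 n
  have ha1 : 1 ≤ cfA α (n + 2) := cfA_one_le hirr h0 h1 (n + 1)
  have key : ∀ m k : ℕ, 2 * cfTheta α k < cfTheta α m → 2 * cfDelta α k < cfDelta α m := by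
    intro m k h
    have hy : π * cfTheta α m < π / 2 := by
      have := hθlt m
      have hπ := Real.pi_pos
      nlinarith
    have hx : 0 < π * cfTheta α k := mul_pos Real.pi_pos (hθpos k)
    have hxy : 2 * (π * cfTheta α k) < π * cfTheta α m := by
      have hπ := Real.pi_pos
      nlinarith
    have := sin_sq_lt hx hxy hy
    rw [cfDelta, cfDelta, intDist_eq hirr h0 h2, intDist_eq hirr h0 h2]
    nlinarith
  constructor
  · apply key
    have ha : (1:ℝ) ≤ (cfA α (n + 2) : ℝ) := by exact_mod_cast ha1
    have hlt := cfTheta_lt hirr h0 h1 (n + 1)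
    nlinarith [hθpos (n+1), hθpos (n+2)]
  · intro ha2
    apply key
    have ha : (2:ℝ) ≤ (cfA α (n + 2) : ℝ) := by exact_mod_cast ha2
    nlinarith [hθpos (n+1), hθpos (n+2)]
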